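/- Let p_1,…,p_l be nonnegative reals summing to at most 1, and suppose Σ_{i=1}^l p_i · exp(a·√(log(1/p_i))) ≥ 2 where a > 0 (terms with p_i = 0 are interpreted as 0). Then for any b ≥ a, Σ_{i=1}^l p_i · exp(b·√(log(1/p_i))) ≥ 2^{b/a}. -/
import Mathlib

open Finset

lemma jensen_sub_prob {l : ℕ} (w z : Fin l → ℝ) (hw : ∀ i, 0 ≤ w i) (hz : ∀ i, 0 ≤ z i)
    (hs : ∑ i, w i ≤ 1) {q : ℝ} (hq : 1 ≤ q) :
    (∑ i, w i * z i) ^ q ≤ ∑ i, w i * z i ^ q := by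
  have hq0 : q ≠ 0 := by positivity
  set w' : Option (Fin l) → ℝ := fun o => o.elim (1 - ∑ i, w i) w with hw'
  set z' : Option (Fin l) → ℝ := fun o => o.elim 0 z with hz'
  have key := Real.rpow_arith_mean_le_arith_mean_rpow Finset.univ w' z'
    (fun o _ => by cases o <;> simp [w', hw, sub_nonneg.2 hs])
    (by simp [Fintype.sum_option, w'])
    (fun o _ => by cases o <;> simp [z', hz]) hq
  simpa [Fintype.sum_option, w', z', Real.zero_rpow hq0] using key

/-- Jensen/power-mean step: if Σ p_i ≤ 1 and Σ p_i·exp(a√(log(1/p_i))) ≥ 2,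
then for b ≥ a, Σ p_i·exp(b√(log(1/p_i))) ≥ 2^{b/a}. -/
theorem jensen_power_mean_step {l : ℕ} (p : Fin l → ℝ) (hp : ∀ i, 0 ≤ p i)
    (hsum : ∑ i : Fin l, p i ≤ 1) (a b : ℝ) (ha : 0 < a) (hab : a ≤ b)
    (h2 : 2 ≤ ∑ i : Fin l, p i * Real.exp (a * Real.sqrt (Real.log (1 / p i)))) :
    (2 : ℝ) ^ (b / a) ≤
      ∑ i : Fin l, p i * Real.exp (b * Real.sqrt (Real.log (1 / p i))) := by
  set q : ℝ := b / a with hqdef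
  have hq : 1 ≤ q := (one_le_div ha).2 hab
  set z : Fin l → ℝ := fun i => Real.exp (a * Real.sqrt (Real.log (1 / p i))) with hzdef
  have hz : ∀ i, 0 ≤ z i := fun i => (Real.exp_pos _).le
  have hrw : ∀ i, p i * Real.exp (b * Real.sqrt (Real.log (1 / p i))) = p i * z i ^ q := by
    intro i
    rw [hzdef, ← Real.exp_mul]
    congr 1
    rw [hqdef, show a * Real.sqrt (Real.log (1 / p i)) * (b / a) =
      b / a * a * Real.sqrt (Real.log (1 / p i)) by ring, div_mul_cancel₀ _ ha.ne']
  calc (2 : ℝ) ^ q ≤ (∑ i, p i * z i) ^ q := by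
        exact Real.rpow_le_rpow (by norm_num) h2 (by positivity)
    _ ≤ ∑ i, p i * z i ^ q := jensen_sub_prob p z hp hz hsum hq
    _ = ∑ i, p i * Real.exp (b * Real.sqrt (Real.log (1 / p i))) := by
        simp_rw [hrw]
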